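/- Let 0 < r₁ < r₂, Ω = {x ∈ ℝ³ : r₁ < |x| < r₂}, ω ∈ ℝ³ with ω ≠ 0, ḡ ∈ ℝ, and define M(x) = ḡ/|x| + (1/2)|ω × x|² on Ω. Let p : (0,∞)² → ℝ be continuously differentiable with ∂p/∂θ(ρ,θ) ≠ 0 for all (ρ,θ) ∈ (0,∞)², let ρ : Ω → (0,∞) be twice continuously differentiable, and let θ(x) = g(|x|) where g : (r₁,r₂) → (0,∞) is twice continuously differentiable with g'(r) ≠ 0 for all r ∈ (r₁,r₂). Then it is impossible that ∇[p(ρ(x),θ(x))] = ρ(x)·∇M(x) holds for every x ∈ Ω. -/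

import Mathlib

open Set Filter Topology InnerProductSpace

/-- The cross product on `ℝ³ = EuclideanSpace ℝ (Fin 3)`. -/
noncomputable def cross3 (a b : EuclideanSpace ℝ (Fin 3)) : EuclideanSpace ℝ (Fin 3) :=
  (WithLp.equiv 2 (Fin 3 → ℝ)).symm
    ![a 1 * b 2 - a 2 * b 1, a 2 * b 0 - a 0 * b 2, a 0 * b 1 - a 1 * b 0]

local notation "H3" => EuclideanSpace ℝ (Fin 3)

lemma lagrange (ω y : H3) :
    ‖cross3 ω y‖ ^ 2 = ‖ω‖ ^ 2 * ‖y‖ ^ 2 - (inner ℝ ω y : ℝ) ^ 2 := by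
  rw [← real_inner_self_eq_norm_sq, ← real_inner_self_eq_norm_sq, ← real_inner_self_eq_norm_sq]
  simp [cross3, PiLp.inner_apply, RCLike.inner_apply, Fin.sum_univ_three,
    EuclideanSpace.norm_sq_eq, Real.norm_eq_abs, sq_abs]
  ring

lemma hasFDerivAt_isq (y : H3) :
    HasFDerivAt (fun z : H3 => (inner ℝ z z : ℝ))
      ((fderivInnerCLM ℝ (y, y)).comp
        ((ContinuousLinearMap.id ℝ H3).prod (ContinuousLinearMap.id ℝ H3))) y :=
  (hasFDerivAt_id y).inner ℝ (hasFDerivAt_id y)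

lemma norm_eq_sqrt_isq : (fun y : H3 => ‖y‖) = fun y => Real.sqrt (inner ℝ y y : ℝ) := by
  funext y
  rw [real_inner_self_eq_norm_sq, Real.sqrt_sq (norm_nonneg y)]

noncomputable def Gfun (ω : H3) (gbar : ℝ) : H3 → H3 := fun z =>
  (‖ω‖ ^ 2 - gbar * ((Real.sqrt (inner ℝ z z : ℝ)) ^ 3)⁻¹) • z - (inner ℝ ω z : ℝ) • ω

lemma gradM (ω : H3) (gbar : ℝ) (y : H3) (hy : y ≠ 0) :
    HasGradientAt (fun z : H3 => gbar / ‖z‖ + (1 / 2) * ‖cross3 ω z‖ ^ 2)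
      (Gfun ω gbar y) y := by
  have hny : 0 < ‖y‖ := norm_pos_iff.mpr hy
  have hA : (inner ℝ y y : ℝ) = ‖y‖ ^ 2 := real_inner_self_eq_norm_sq y
  have hApos : 0 < (inner ℝ y y : ℝ) := by rw [hA]; positivity
  have hsq : Real.sqrt (inner ℝ y y : ℝ) = ‖y‖ := by
    rw [hA, Real.sqrt_sq (norm_nonneg y)]
  have hfun : (fun z : H3 => gbar / ‖z‖ + (1 / 2) * ‖cross3 ω z‖ ^ 2)
      = fun z => gbar * (Real.sqrt (inner ℝ z z : ℝ))⁻¹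
          + (1 / 2) * (‖ω‖ ^ 2 * (inner ℝ z z : ℝ) - (inner ℝ ω z : ℝ) * (inner ℝ ω z : ℝ)) := by
    funext z
    rw [lagrange, div_eq_mul_inv, real_inner_self_eq_norm_sq, Real.sqrt_sq (norm_nonneg z)]
    ring
  rw [hasGradientAt_iff_hasFDerivAt, hfun]
  have h1t : HasDerivAt (fun t : ℝ => gbar * (Real.sqrt t)⁻¹)
      (gbar * (-(1 / (2 * Real.sqrt (inner ℝ y y : ℝ))) / (Real.sqrt (inner ℝ y y : ℝ)) ^ 2))
      (inner ℝ y y : ℝ) :=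
    ((Real.hasDerivAt_sqrt hApos.ne').inv (by rw [hsq]; exact hny.ne')).const_mul gbar
  have h1 := h1t.comp_hasFDerivAt (f := fun z : H3 => (inner ℝ z z : ℝ)) y (hasFDerivAt_isq y)
  have hι : HasFDerivAt (fun z : H3 => (inner ℝ ω z : ℝ)) (innerSL ℝ ω) y :=
    (innerSL ℝ ω).hasFDerivAt
  have h2 := ((((hasFDerivAt_isq y).const_mul (‖ω‖ ^ 2)).sub (hι.mul hι)).const_mul (1/2 : ℝ))
  refine (h1.add h2).congr_fderiv ?_
  ext v
  simp only [toDual_apply_apply, Gfun, inner_sub_left, inner_smul_left, RCLike.inner_apply,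
    conj_trivial, ContinuousLinearMap.add_apply, ContinuousLinearMap.smul_apply,
    ContinuousLinearMap.comp_apply, ContinuousLinearMap.prod_apply,
    ContinuousLinearMap.id_apply, fderivInnerCLM_apply, ContinuousLinearMap.coe_sub',
    Pi.sub_apply, innerSL_apply_apply, smul_eq_mul, hsq]
  rw [real_inner_comm v y]
  field_simp
  ring


set_option maxHeartbeats 1000000 in
/-- Nonexistence of static solutions in the rotating spherical shell
`Ω = {r₁ < |x| < r₂}` with potential `M(x) = ḡ/|x| + (1/2)|ω × x|²`, `ω ≠ 0`: if
`p` is continuously differentiable on `(0,∞)²` with `∂p/∂θ ≠ 0` there, `ρ : Ω → (0,∞)`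
is twice continuously differentiable, and `θ(x) = g(|x|)` with `g : (r₁,r₂) → (0,∞)`
twice continuously differentiable and `g' ≠ 0`, then the hydrostatic balance
`∇[p(ρ,θ)] = ρ ∇M` cannot hold on all of `Ω`. -/
theorem stmt14 (r₁ r₂ : ℝ) (hr₁ : 0 < r₁) (hr₁₂ : r₁ < r₂)
    (ω : EuclideanSpace ℝ (Fin 3)) (hω : ω ≠ 0) (gbar : ℝ)
    (p : ℝ × ℝ → ℝ)
    (hp : ContDiffOn ℝ 1 p (Set.Ioi 0 ×ˢ Set.Ioi 0))
    (hpθ : ∀ r t : ℝ, 0 < r → 0 < t → deriv (fun t' => p (r, t')) t ≠ 0)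
    (ρ : EuclideanSpace ℝ (Fin 3) → ℝ)
    (hρpos : ∀ x : EuclideanSpace ℝ (Fin 3), r₁ < ‖x‖ → ‖x‖ < r₂ → 0 < ρ x)
    (hρ : ContDiffOn ℝ 2 ρ {x : EuclideanSpace ℝ (Fin 3) | r₁ < ‖x‖ ∧ ‖x‖ < r₂})
    (g : ℝ → ℝ)
    (hgC : ContDiffOn ℝ 2 g (Set.Ioo r₁ r₂))
    (hgpos : ∀ r ∈ Set.Ioo r₁ r₂, 0 < g r)
    (hg' : ∀ r ∈ Set.Ioo r₁ r₂, deriv g r ≠ 0) :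
    ¬ (∀ x : EuclideanSpace ℝ (Fin 3), r₁ < ‖x‖ → ‖x‖ < r₂ →
        gradient (fun y : EuclideanSpace ℝ (Fin 3) => p (ρ y, g ‖y‖)) x =
          ρ x • gradient
            (fun y : EuclideanSpace ℝ (Fin 3) => gbar / ‖y‖ + (1 / 2) * ‖cross3 ω y‖ ^ 2) x) := by
  intro hyp
  have hw : 0 < ‖ω‖ := norm_pos_iff.mpr hω
  -- a unit vector orthogonal to ω
  obtain ⟨u, huω, hun⟩ : ∃ u : H3, (inner ℝ ω u : ℝ) = 0 ∧ ‖u‖ = 1 := by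
    have hne : (Submodule.span ℝ {ω})ᗮ ≠ ⊥ := by
      intro hbot
      have h1 : Module.finrank ℝ (Submodule.span ℝ {ω}) = 1 := finrank_span_singleton hω
      have h2 := Submodule.finrank_add_finrank_orthogonal (K := Submodule.span ℝ {ω})
      rw [hbot] at h2
      simp [h1, finrank_euclideanSpace_fin] at h2
    obtain ⟨v, hv_mem, hv_ne⟩ := Submodule.exists_mem_ne_zero_of_ne_bot hne
    have hvω : (inner ℝ ω v : ℝ) = 0 :=
      (Submodule.mem_orthogonal _ v).mp hv_mem ω (Submodule.mem_span_singleton_self ω)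
    refine ⟨‖v‖⁻¹ • v, ?_, ?_⟩
    · rw [real_inner_smul_right, hvω, mul_zero]
    · rw [norm_smul]
      simp [norm_ne_zero_iff.mpr hv_ne]
  set e : H3 := ‖ω‖⁻¹ • ω with he
  set r : ℝ := (r₁ + r₂) / 2 with hr
  have hr0 : 0 < r := by rw [hr]; linarith
  have hrmem : r ∈ Set.Ioo r₁ r₂ := ⟨by simp [hr]; linarith, by simp [hr]; linarith⟩
  set s : ℝ := r / Real.sqrt 2 with hs
  have hsqrt2 : (0:ℝ) < Real.sqrt 2 := Real.sqrt_pos.mpr (by norm_num)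
  have hs0 : 0 < s := by positivity
  set x₀ : H3 := s • e + s • u with hx₀
  -- inner product facts
  have iωe : (inner ℝ ω e : ℝ) = ‖ω‖ := by
    rw [he, real_inner_smul_right, real_inner_self_eq_norm_sq]
    field_simp
  have ieu : (inner ℝ e u : ℝ) = 0 := by
    rw [he, real_inner_smul_left, huω, mul_zero]
  have iue : (inner ℝ u e : ℝ) = 0 := by rw [real_inner_comm]; exact ieu
  have iee : (inner ℝ e e : ℝ) = 1 := by
    rw [he, real_inner_smul_left, real_inner_smul_right, real_inner_self_eq_norm_sq]
    field_simp
  have iuu : (inner ℝ u u : ℝ) = 1 := by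
    rw [real_inner_self_eq_norm_sq, hun]; norm_num
  have iωu : (inner ℝ ω u : ℝ) = 0 := huω
  have is2 : s ^ 2 * 2 = r ^ 2 := by
    rw [hs, div_pow, Real.sq_sqrt (by norm_num : (2:ℝ) ≥ 0)]
    field_simp
  have ix₀x₀ : (inner ℝ x₀ x₀ : ℝ) = r ^ 2 := by
    rw [hx₀]
    simp only [inner_add_left, inner_add_right, real_inner_smul_left, real_inner_smul_right,
      iee, iuu, ieu, iue]
    nlinarith [is2]
  have hx₀r : ‖x₀‖ = r := by
    have := real_inner_self_eq_norm_sq x₀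
    rw [ix₀x₀] at this
    nlinarith [norm_nonneg x₀]
  have ix₀e : (inner ℝ x₀ e : ℝ) = s := by
    rw [hx₀]
    simp only [inner_add_left, real_inner_smul_left, iee, iue]
    ring
  have ix₀u : (inner ℝ x₀ u : ℝ) = s := by
    rw [hx₀]
    simp only [inner_add_left, real_inner_smul_left, iuu, ieu]
    ring
  have iex₀ : (inner ℝ e x₀ : ℝ) = s := by rw [real_inner_comm]; exact ix₀e
  have iux₀ : (inner ℝ u x₀ : ℝ) = s := by rw [real_inner_comm]; exact ix₀u
  have iωx₀ : (inner ℝ ω x₀ : ℝ) = ‖ω‖ * s := by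
    rw [hx₀]
    simp only [inner_add_right, real_inner_smul_right, iωe, iωu]
    ring
  -- the shell
  set S : Set H3 := {x : H3 | r₁ < ‖x‖ ∧ ‖x‖ < r₂} with hS
  have hSopen : IsOpen S := by
    have : S = (fun x : H3 => ‖x‖) ⁻¹' Set.Ioo r₁ r₂ := rfl
    rw [this]
    exact isOpen_Ioo.preimage continuous_norm
  have hx₀S : x₀ ∈ S := by
    refine ⟨?_, ?_⟩ <;> rw [hx₀r] <;> [exact hrmem.1; exact hrmem.2]
  set P : H3 → ℝ := fun y => p (ρ y, g ‖y‖) with hPdef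
  set G : H3 → H3 := Gfun ω gbar with hGdef
  have hyp' : ∀ y ∈ S, gradient P y = ρ y • G y := by
    intro y hy
    have hyne : y ≠ 0 := by
      intro h
      rw [h] at hy
      have := hy.1
      simp at this
      linarith
    rw [hyp y hy.1 hy.2, (gradM ω gbar y hyne).gradient]
  have hPdiff : ∀ y ∈ S, DifferentiableAt ℝ P y := by
    intro y hy
    have hyn : 0 < ‖y‖ := lt_trans hr₁ hy.1
    have hApos : 0 < (inner ℝ y y : ℝ) := by rw [real_inner_self_eq_norm_sq]; positivity
    have hρd : DifferentiableAt ℝ ρ y :=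
      (hρ.contDiffAt (hSopen.mem_nhds hy)).differentiableAt two_ne_zero
    have hnormd : DifferentiableAt ℝ (fun z : H3 => ‖z‖) y := by
      rw [norm_eq_sqrt_isq]
      exact ((Real.hasDerivAt_sqrt hApos.ne').comp_hasFDerivAt
        (f := fun z : H3 => (inner ℝ z z : ℝ)) y (hasFDerivAt_isq y)).differentiableAt
    have hgd : DifferentiableAt ℝ g ‖y‖ :=
      (hgC.contDiffAt (isOpen_Ioo.mem_nhds ⟨hy.1, hy.2⟩)).differentiableAt two_ne_zero
    have hmem : (ρ y, g ‖y‖) ∈ Set.Ioi (0:ℝ) ×ˢ Set.Ioi (0:ℝ) :=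
      ⟨hρpos y hy.1 hy.2, hgpos ‖y‖ ⟨hy.1, hy.2⟩⟩
    have hpd : DifferentiableAt ℝ p (ρ y, g ‖y‖) :=
      (hp.contDiffAt ((isOpen_Ioi.prod isOpen_Ioi).mem_nhds hmem)).differentiableAt one_ne_zero
    exact hpd.comp y (hρd.prodMk (hgd.comp y hnormd))
  set f' : H3 → (H3 →L[ℝ] ℝ) := fun y => (toDual ℝ (EuclideanSpace ℝ (Fin 3))) (ρ y • G y)
    with hf'def
  have hev : ∀ᶠ y in 𝓝 x₀, HasFDerivAt P (f' y) y := by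
    filter_upwards [hSopen.mem_nhds hx₀S] with y hy
    have h1 : HasGradientAt P (gradient P y) y := (hPdiff y hy).hasGradientAt
    rw [hyp' y hy] at h1
    exact h1.hasFDerivAt
  -- derivative data at x₀
  have hAxpos : 0 < (inner ℝ x₀ x₀ : ℝ) := by rw [ix₀x₀]; positivity
  have hsqx : Real.sqrt (inner ℝ x₀ x₀ : ℝ) = r := by rw [ix₀x₀, Real.sqrt_sq hr0.le]
  have hρ'at : HasFDerivAt ρ (fderiv ℝ ρ x₀) x₀ :=
    ((hρ.contDiffAt (hSopen.mem_nhds hx₀S)).differentiableAt two_ne_zero).hasFDerivAt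
  set ρ' := fderiv ℝ ρ x₀ with hρ'def
  have hsqx_ne : Real.sqrt (inner ℝ x₀ x₀ : ℝ) ^ 3 ≠ 0 := by rw [hsqx]; positivity
  have hφt := ((((Real.hasDerivAt_sqrt hAxpos.ne').pow 3).inv hsqx_ne).const_mul
      gbar).const_sub (‖ω‖ ^ 2)
  have hφ := hφt.comp_hasFDerivAt (f := fun z : H3 => (inner ℝ z z : ℝ)) x₀ (hasFDerivAt_isq x₀)
  have hι : HasFDerivAt (fun z : H3 => (inner ℝ ω z : ℝ)) (innerSL ℝ ω) x₀ :=
    (innerSL ℝ ω).hasFDerivAt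
  have hGf := (hφ.smul (hasFDerivAt_id x₀)).sub (hι.smul (hasFDerivAt_const ω x₀))
  have hρG := hρ'at.smul hGf
  have hf'' := (((toDual ℝ (EuclideanSpace ℝ (Fin 3))).toContinuousLinearEquiv :
      H3 ≃L[ℝ] (H3 →L[ℝ] ℝ)).toContinuousLinearMap).hasFDerivAt.comp x₀ hρG
  have hsymm := second_derivative_symmetric_of_eventually (f' := f') hev hf''
  have key := hsymm e u
  simp only [ContinuousLinearMap.comp_apply, ContinuousLinearMap.smul_apply,
    ContinuousLinearMap.add_apply, ContinuousLinearMap.coe_sub', Pi.sub_apply,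
    ContinuousLinearMap.smulRight_apply, ContinuousLinearMap.id_apply,
    ContinuousLinearMap.zero_apply, ContinuousLinearEquiv.coe_coe,
    LinearIsometryEquiv.coe_toContinuousLinearEquiv, toDual_apply_apply, Function.comp_apply,
    fderivInnerCLM_apply, innerSL_apply_apply, id_eq, hsqx,
    ContinuousLinearMap.prod_apply, Pi.smul_apply, Pi.smul_apply', Pi.pow_apply, Pi.inv_apply] at key
  simp only [inner_add_left, inner_sub_left, real_inner_smul_left, inner_zero_left,
    smul_eq_mul, iee, ieu, iue, iuu, ix₀e, ix₀u, iex₀, iux₀, iωe, iωu, iωx₀] at key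
  have E3 : ρ' e * ((‖ω‖ ^ 2 - gbar * (r ^ 3)⁻¹) * s)
      = ρ' u * ((‖ω‖ ^ 2 - gbar * (r ^ 3)⁻¹) * s - ‖ω‖ ^ 2 * s) := by
    linear_combination key
  -- chain rule at x₀
  have iGe : (inner ℝ (G x₀) e : ℝ) = (‖ω‖ ^ 2 - gbar * (r ^ 3)⁻¹) * s - ‖ω‖ ^ 2 * s := by
    rw [hGdef]
    simp only [Gfun, inner_sub_left, real_inner_smul_left, hsqx, ix₀e, iωe, iωx₀]
    ring
  have iGu : (inner ℝ (G x₀) u : ℝ) = (‖ω‖ ^ 2 - gbar * (r ^ 3)⁻¹) * s := by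
    rw [hGdef]
    simp only [Gfun, inner_sub_left, real_inner_smul_left, hsqx, ix₀u, iωu, iωx₀]
    ring
  have hz₀ : (ρ x₀, g r) ∈ Set.Ioi (0:ℝ) ×ˢ Set.Ioi (0:ℝ) :=
    ⟨hρpos x₀ hx₀S.1 hx₀S.2, hgpos r hrmem⟩
  have hpz : HasFDerivAt p (fderiv ℝ p (ρ x₀, g r)) (ρ x₀, g r) :=
    ((hp.contDiffAt ((isOpen_Ioi.prod isOpen_Ioi).mem_nhds hz₀)).differentiableAt
      one_ne_zero).hasFDerivAt
  set Dp := fderiv ℝ p (ρ x₀, g r) with hDpdef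
  have hpz' : HasFDerivAt p Dp (ρ x₀, g ‖x₀‖) := by rw [hx₀r]; exact hpz
  have hgd : HasDerivAt g (deriv g r) ‖x₀‖ := by
    rw [hx₀r]
    exact ((hgC.contDiffAt (isOpen_Ioo.mem_nhds hrmem)).differentiableAt two_ne_zero).hasDerivAt
  have hnormF' : HasFDerivAt (fun z : H3 => ‖z‖)
      ((1 / (2 * Real.sqrt (inner ℝ x₀ x₀ : ℝ))) • ((fderivInnerCLM ℝ (x₀, x₀)).comp
        ((ContinuousLinearMap.id ℝ H3).prod (ContinuousLinearMap.id ℝ H3)))) x₀ := by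
    rw [norm_eq_sqrt_isq]
    exact (Real.hasDerivAt_sqrt hAxpos.ne').comp_hasFDerivAt
      (f := fun z : H3 => (inner ℝ z z : ℝ)) x₀ (hasFDerivAt_isq x₀)
  have hκ := hgd.comp_hasFDerivAt x₀ hnormF'
  have hPx := hpz'.comp x₀ (hρ'at.prodMk hκ)
  have huniq := hPx.unique hev.self_of_nhds
  have hEe := DFunLike.congr_fun huniq e
  have hEu := DFunLike.congr_fun huniq u
  simp only [ContinuousLinearMap.comp_apply, ContinuousLinearMap.prod_apply,
    ContinuousLinearMap.smul_apply, fderivInnerCLM_apply, ContinuousLinearMap.id_apply,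
    smul_eq_mul, hsqx, iex₀, ix₀e, iux₀, ix₀u, hf'def, toDual_apply_apply, real_inner_smul_left,
    iGe, iGu] at hEe hEu
  have hdp : ∀ a b : ℝ, Dp (a, b) = a * Dp (1, 0) + b * Dp (0, 1) := by
    intro a b
    have h : (a, b) = a • ((1:ℝ), (0:ℝ)) + b • ((0:ℝ), (1:ℝ)) := by
      simp [Prod.ext_iff]
    rw [h, map_add, map_smul, map_smul, smul_eq_mul, smul_eq_mul]
  rw [hdp] at hEe hEu
  have hθd : HasDerivAt (fun t => p (ρ x₀, t)) (Dp (0, 1)) (g r) :=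
    hpz.comp_hasDerivAt (g r) ((hasDerivAt_const (g r) (ρ x₀)).prodMk (hasDerivAt_id (g r)))
  have hptne : Dp (0, 1) ≠ 0 := by
    rw [← hθd.deriv]
    exact hpθ (ρ x₀) (g r) (hρpos x₀ hx₀S.1 hx₀S.2) (hgpos r hrmem)
  have hdne : deriv g r ≠ 0 := hg' r hrmem
  have final : s * Dp (0, 1) * (deriv g r * (1 / (2 * r) * (s + s))) * ‖ω‖ ^ 2 = 0 := by
    linear_combination (s * (‖ω‖ ^ 2 - gbar * (r ^ 3)⁻¹)) * hEe
      - (s * ((‖ω‖ ^ 2 - gbar * (r ^ 3)⁻¹) - ‖ω‖ ^ 2)) * hEu - Dp (1, 0) * E3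
  have hXne : deriv g r * (1 / (2 * r) * (s + s)) ≠ 0 := by
    apply mul_ne_zero hdne
    have h2 : 1 / (2 * r) * (s + s) = s / r := by field_simp; ring
    rw [h2]
    positivity
  exact (mul_ne_zero (mul_ne_zero (mul_ne_zero hs0.ne' hptne) hXne)
    (pow_ne_zero 2 hw.ne')) final
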